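/- The map c ↦ (c' , s), sending a nonempty sequence c ∈ Σ₄^n with ℓ-RLL, last run s, and synthesis time ≤ T to the pair consisting of its prefix c' of length n - |s| and its last run, is a bijection between C(n, s, T) and the union over runs s' with e(s') ≠ e(s) of C(n - |s|, s', T - 4(|s|-1) - ((e(s) - e(s')) mod 4)), whenever n > |s|. -/

import Mathlib

open scoped Classical

/-- Shifted modulo: maps any integer to {1,2,3,4}, with `smod x ≡ x [ZMOD 4]`. -/
def smod (x : ℤ) : ℤ := (x - 1) % 4 + 1

/-- Auxiliary synthesis-time sum over the differential sequence. -/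
def synthAux : ℤ → List ℤ → ℤ
  | _, [] => 0
  | prev, b :: rest => smod (b - prev) + synthAux b rest

/-- Synthesis time `T(c) = Σ dᵢ(c)` with `d₁ = c₁`, `dᵢ = (cᵢ - c_{i-1}) mod 4` (shifted). -/
def synth : List ℤ → ℤ
  | [] => 0
  | a :: rest => a + synthAux a rest

/-- Membership in the alphabet Σ₄ = {1,2,3,4}. -/
def inSigma4 (c : List ℤ) : Prop := ∀ x ∈ c, 1 ≤ x ∧ x ≤ 4

/-- ℓ-runlength-limited: no ℓ+1 consecutive equal symbols. -/
def RLL (ℓ : ℕ) (c : List ℤ) : Prop :=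
  ∀ a ∈ c, ¬ (List.replicate (ℓ + 1) a <:+: c)

/-- The last (maximal constant) run of `c` is `{a}^t`. -/
def lastRunIs (c : List ℤ) (a : ℤ) (t : ℕ) : Prop :=
  List.replicate t a <:+ c ∧ ¬ (List.replicate (t + 1) a <:+ c)

/-- The finite set of all length-`n` sequences over Σ₄ = {1,2,3,4}. -/
def seqs (n : ℕ) : Finset (List ℤ) :=
  (Finset.univ : Finset (Fin n → Fin 4)).image
    (fun f => (List.ofFn f).map (fun x : Fin 4 => ((x : ℕ) : ℤ) + 1))

/-- GC-content: number of symbols greater than 2 (i.e. C or G). -/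
def gc (c : List ℤ) : ℕ := (c.filter (fun x => 2 < x)).length

/-- Length-`n` ℓ-RLL sequences with last run `{a}^t` and synthesis time at most `T`. -/
noncomputable def Cset (n ℓ : ℕ) (a : ℤ) (t : ℕ) (T : ℤ) : Finset (List ℤ) :=
  (seqs n).filter (fun c => RLL ℓ c ∧ lastRunIs c a t ∧ synth c ≤ T)

noncomputable def Ncount (n ℓ : ℕ) (a : ℤ) (t : ℕ) (T : ℤ) : ℕ := (Cset n ℓ a t T).card

lemma smod_zero : smod 0 = 4 := by decide

lemma synthAux_append (prev : ℤ) (l m : List ℤ) :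
    synthAux prev (l ++ m) = synthAux prev l + synthAux (l.getLastD prev) m := by
  induction l generalizing prev with
  | nil => simp [synthAux]
  | cons x xs ih =>
    simp only [List.cons_append, synthAux, List.append_eq, ih x, List.getLastD_cons]
    ring

lemma synthAux_replicate_self (a : ℤ) (t : ℕ) :
    synthAux a (List.replicate t a) = 4 * t := by
  induction t with
  | zero => simp [synthAux]
  | succ n ih =>
    rw [List.replicate_succ]
    simp only [synthAux, ih, sub_self, smod_zero]
    push_cast; ring

lemma synthAux_replicate (b a : ℤ) (t : ℕ) (ht : 1 ≤ t) :
    synthAux b (List.replicate t a) = smod (a - b) + 4 * ((t : ℤ) - 1) := by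
  obtain ⟨s, rfl⟩ : ∃ s, t = s + 1 := ⟨t - 1, by omega⟩
  rw [List.replicate_succ]
  simp only [synthAux, synthAux_replicate_self]
  push_cast; ring

lemma synth_append_replicate {c : List ℤ} (hc : c ≠ []) (a : ℤ) (t : ℕ) (ht : 1 ≤ t) :
    synth (c ++ List.replicate t a)
      = synth c + smod (a - c.getLast hc) + 4 * ((t : ℤ) - 1) := by
  cases c with
  | nil => exact absurd rfl hc
  | cons x xs =>
    simp only [List.cons_append, synth, synthAux_append,
      synthAux_replicate _ _ _ ht]
    have : (x :: xs).getLast hc = xs.getLastD x := by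
      simp [List.getLast_eq_getLastD]
    rw [this]; ring

lemma infix_replicate_split {x : ℤ} {k : ℕ} {l₁ l₂ : List ℤ}
    (h : List.replicate k x <:+: l₁ ++ l₂) :
    (List.replicate k x <:+: l₁) ∨ (List.replicate k x <:+: l₂) ∨
    (∃ k₁ k₂, k₁ + k₂ = k ∧ 1 ≤ k₁ ∧ 1 ≤ k₂ ∧
      List.replicate k₁ x <:+ l₁ ∧ List.replicate k₂ x <+: l₂) := by
  obtain ⟨s, t, hst⟩ := h
  obtain ⟨n, hn⟩ : ∃ n, l₁.length = n := ⟨_, rfl⟩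
  have hTake : l₁ = (s ++ List.replicate k x ++ t).take n := by
    rw [hst, ← hn, List.take_left]
  have hDrop : l₂ = (s ++ List.replicate k x ++ t).drop n := by
    rw [hst, ← hn, List.drop_left]
  rcases le_or_gt (s.length + k) n with h1 | h1
  · left
    have e1 : (s ++ List.replicate k x ++ t).take n
        = (s ++ List.replicate k x) ++ t.take (n - (s.length + k)) := by
      rw [List.take_append,
        List.take_of_length_le
          (by simp only [List.length_append, List.length_replicate]; omega)]
      simp only [List.length_append, List.length_replicate]
    exact ⟨s, t.take (n - (s.length + k)), by rw [hTake, e1, List.append_assoc]⟩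
  rcases le_or_gt n s.length with h2 | h2
  · right; left
    have e1 : (s ++ List.replicate k x ++ t).drop n
        = s.drop n ++ (List.replicate k x ++ t) := by
      rw [List.append_assoc, List.drop_append_of_le_length h2]
    exact ⟨s.drop n, t, by rw [hDrop, e1, List.append_assoc]⟩
  · right; right
    have e1 : (s ++ List.replicate k x ++ t).take n
        = s ++ List.replicate (n - s.length) x := by
      rw [List.append_assoc, List.take_append,
        List.take_of_length_le (by omega),
        List.take_append_of_le_length
          (by simp only [List.length_replicate]; omega),
        List.take_replicate]
      congr 2
      omega
    have e2 : (s ++ List.replicate k x ++ t).drop n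
        = List.replicate (k - (n - s.length)) x ++ t := by
      rw [List.append_assoc, List.drop_append,
        List.drop_of_length_le (by omega),
        List.drop_append_of_le_length
          (by simp only [List.length_replicate]; omega),
        List.drop_replicate]
      simp
    exact ⟨n - s.length, k - (n - s.length), by omega, by omega, by omega,
      ⟨s, by rw [hTake, e1]⟩, ⟨t, by rw [hDrop, e2]⟩⟩

lemma getLast_of_replicate_suffix {l : List ℤ} {b : ℤ} {m : ℕ} (hm : 1 ≤ m)
    (h : List.replicate m b <:+ l) (hl : l ≠ []) : l.getLast hl = b := by
  obtain ⟨s, rfl⟩ := h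
  rw [List.getLast_append_of_ne_nil (h₂ := by simp; omega)]
  exact List.getLast_replicate _

lemma replicate_prefix_takeWhile {l : List ℤ} {b : ℤ} {m : ℕ}
    (h : List.replicate m b <+: l) :
    m ≤ (l.takeWhile (fun x => decide (x = b))).length := by
  induction m generalizing l with
  | zero => omega
  | succ n ih =>
    rw [List.replicate_succ] at h
    obtain ⟨l', rfl⟩ : ∃ l', l = b :: l' := by
      cases l with
      | nil => simpa using h.length_le
      | cons y ys =>
        obtain ⟨h1, -⟩ := List.cons_prefix_cons.mp h
        exact ⟨ys, by rw [h1]⟩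
    have h2 : List.replicate n b <+: l' := (List.cons_prefix_cons.mp h).2
    have := ih h2
    rw [List.takeWhile_cons_of_pos (by simp)]
    simpa using this

lemma exists_lastRun (c : List ℤ) (hc : c ≠ []) :
    ∃ u, 1 ≤ u ∧ lastRunIs c (c.getLast hc) u := by
  set b := c.getLast hc with hb
  set u := (c.reverse.takeWhile (fun x => decide (x = b))).length with hu
  have htw : c.reverse.takeWhile (fun x => decide (x = b)) = List.replicate u b := by
    rw [List.eq_replicate_iff]
    exact ⟨rfl, fun x hx => by simpa using List.mem_takeWhile_imp hx⟩
  have hpre : List.replicate u b <+: c.reverse := htw ▸ List.takeWhile_prefix _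
  have hsuf : List.replicate u b <:+ c := by
    rw [← List.reverse_prefix, List.reverse_replicate]
    exact hpre
  have hone : List.replicate 1 b <:+ c :=
    ⟨c.dropLast, by simpa using List.dropLast_append_getLast hc⟩
  have h1u : 1 ≤ u := by
    have := replicate_prefix_takeWhile (l := c.reverse) (b := b) (m := 1)
      (by rw [← List.reverse_replicate]; exact List.IsSuffix.reverse hone)
    omega
  refine ⟨u, h1u, hsuf, fun hcon => ?_⟩
  have := replicate_prefix_takeWhile (l := c.reverse) (b := b) (m := u + 1)
    (by rw [← List.reverse_replicate]; exact List.IsSuffix.reverse hcon)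
  omega

lemma mem_seqs_iff {n : ℕ} {c : List ℤ} :
    c ∈ seqs n ↔ c.length = n ∧ inSigma4 c := by
  constructor
  · intro hc
    obtain ⟨f, -, rfl⟩ := Finset.mem_image.mp hc
    refine ⟨by simp, fun x hx => ?_⟩
    simp only [List.mem_map, List.mem_ofFn] at hx
    obtain ⟨y, ⟨i, rfl⟩, rfl⟩ := hx
    have := (f i).isLt
    omega
  · rintro ⟨hlen, hsig⟩
    refine Finset.mem_image.mpr
      ⟨fun i => ⟨(c.get ⟨(i : ℕ), by omega⟩ - 1).toNat, ?_⟩, Finset.mem_univ _, ?_⟩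
    · have hm := List.getElem_mem (l := c) (n := (i : ℕ)) (by omega)
      have := hsig _ hm
      simp only [List.get_eq_getElem]
      omega
    · apply List.ext_getElem (by simp [hlen])
      intro i h1 h2
      simp only [List.getElem_map, List.getElem_ofFn, List.get_eq_getElem]
      have hm := List.getElem_mem (l := c) (n := i) h2
      have := hsig _ hm
      omega

lemma singleton_suffix_getLast {l : List ℤ} (hl : l ≠ []) : [l.getLast hl] <:+ l :=
  ⟨l.dropLast, List.dropLast_append_getLast hl⟩

lemma RLL_append_replicate {ℓ t : ℕ} {c : List ℤ} {a : ℤ} (hc : c ≠ [])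
    (htℓ : t ≤ ℓ) (hR : RLL ℓ c) (hlast : c.getLast hc ≠ a) :
    RLL ℓ (c ++ List.replicate t a) := by
  intro x _ hinf
  rcases infix_replicate_split hinf with h | h | ⟨k₁, k₂, hk, hk₁, hk₂, h₁, h₂⟩
  · exact hR x (h.subset (List.mem_replicate.mpr ⟨by omega, rfl⟩)) h
  · have := h.length_le
    simp only [List.length_replicate] at this
    omega
  · have h2' := h₂
    rw [List.prefix_replicate_iff] at h2'
    have he := h2'.2
    rw [List.length_replicate] at he
    have hx : x ∈ List.replicate k₂ x := List.mem_replicate.mpr ⟨by omega, rfl⟩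
    rw [he] at hx
    have hxa : x = a := List.eq_of_mem_replicate hx
    exact hlast (hxa ▸ getLast_of_replicate_suffix hk₁ h₁ hc)

lemma RLL_of_RLL_append {ℓ : ℕ} {c d : List ℤ} (h : RLL ℓ (c ++ d)) : RLL ℓ c :=
  fun x hx hinf =>
    h x (List.mem_append_left _ hx) (hinf.trans (List.prefix_append c d).isInfix)

lemma lastRunIs_append_replicate {c : List ℤ} {a : ℤ} {t : ℕ} (hc : c ≠ [])
    (hlast : c.getLast hc ≠ a) :
    lastRunIs (c ++ List.replicate t a) a t := by
  refine ⟨⟨c, rfl⟩, fun hcon => ?_⟩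
  obtain ⟨s, hs⟩ := hcon
  have hs' : (s ++ [a]) ++ List.replicate t a = c ++ List.replicate t a := by
    rw [← hs, List.append_assoc, List.singleton_append, ← List.replicate_succ]
  have h2 := List.append_cancel_right hs'
  apply hlast
  apply getLast_of_replicate_suffix (le_refl 1) _ hc
  exact ⟨s, by simpa using h2⟩

lemma take_append_of_lastRun {c : List ℤ} {a : ℤ} {t n : ℕ} (hc : c.length = n)
    (h : lastRunIs c a t) (hn : t < n) :
    c = c.take (n - t) ++ List.replicate t a ∧ (c.take (n - t)) ≠ [] ∧
      ¬ ([a] <:+ c.take (n - t)) := by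
  obtain ⟨s, hs⟩ := h.1
  have hslen : s.length = n - t := by
    have := congrArg List.length hs
    simp at this
    omega
  have hstake : c.take (n - t) = s := by rw [← hs, ← hslen, List.take_left]
  refine ⟨by rw [hstake, hs], ?_, ?_⟩
  · rw [hstake]
    intro h0
    rw [h0] at hslen
    simp at hslen
    omega
  · rw [hstake]
    rintro ⟨d, hd⟩
    apply h.2
    refine ⟨d, ?_⟩
    rw [← hs, ← hd, List.append_assoc, List.singleton_append, ← List.replicate_succ]

lemma mem_Cset_structure {n ℓ t : ℕ} {a T : ℤ} {c : List ℤ}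
    (hn : t < n) (ht : 1 ≤ t) (hc : c ∈ Cset n ℓ a t T) :
    ∃ b u, b ≠ a ∧ 1 ≤ b ∧ b ≤ 4 ∧ 1 ≤ u ∧ u ≤ ℓ ∧
      c = c.take (n - t) ++ List.replicate t a ∧
      c.take (n - t) ∈ Cset (n - t) ℓ b u (T - 4 * ((t : ℤ) - 1) - smod (a - b)) := by
  rw [Cset, Finset.mem_filter, mem_seqs_iff] at hc
  obtain ⟨⟨hlen, hsig⟩, hR, hrun, hsynth⟩ := hc
  obtain ⟨hdec, hne, hnsuf⟩ := take_append_of_lastRun hlen hrun hn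
  set c' : List ℤ := c.take (n - t) with hc'
  set b : ℤ := c'.getLast hne with hb
  obtain ⟨u, hu1, hrun'⟩ := exists_lastRun c' hne
  have hba : b ≠ a := fun h => hnsuf (h ▸ singleton_suffix_getLast hne)
  have hmem_b : b ∈ c' := List.getLast_mem hne
  have hsub : ∀ x ∈ c', x ∈ c := fun x hx => (List.take_prefix _ _).subset hx
  have hR' : RLL ℓ c' := RLL_of_RLL_append (ℓ := ℓ) (c := c') (d := List.replicate t a)
    (by rw [← hdec]; exact hR)
  have huℓ : u ≤ ℓ := by
    by_contra hcon
    push_neg at hcon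
    apply hR' b hmem_b
    have hsuf2 : List.replicate (ℓ + 1) b <:+ List.replicate u b :=
      ⟨List.replicate (u - (ℓ + 1)) b, by rw [← List.replicate_add]; congr 1; omega⟩
    have hsuf3 : List.replicate u b <:+ c' := hrun'.1
    exact (hsuf2.trans hsuf3).isInfix
  have hlen' : c'.length = n - t := by
    rw [hc', List.length_take, hlen]
    omega
  have hsynth' : synth c' ≤ T - 4 * ((t : ℤ) - 1) - smod (a - b) := by
    have := synth_append_replicate hne a t ht
    rw [← hb, ← hdec] at this
    rw [this] at hsynth
    linarith
  refine ⟨b, u, hba, (hsig b (hsub b hmem_b)).1, (hsig b (hsub b hmem_b)).2, hu1, huℓ,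
    hdec, ?_⟩
  rw [Cset, Finset.mem_filter, mem_seqs_iff]
  exact ⟨⟨hlen', fun x hx => hsig x (hsub x hx)⟩, hR', hrun', hsynth'⟩

lemma append_mem_Cset {n ℓ t u : ℕ} {a b T : ℤ} {c' : List ℤ}
    (hn : t < n) (ht : 1 ≤ t) (htℓ : t ≤ ℓ) (ha : 1 ≤ a ∧ a ≤ 4)
    (hb : b ≠ a) (hu : 1 ≤ u)
    (hc' : c' ∈ Cset (n - t) ℓ b u (T - 4 * ((t : ℤ) - 1) - smod (a - b))) :
    c' ++ List.replicate t a ∈ Cset n ℓ a t T := by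
  rw [Cset, Finset.mem_filter, mem_seqs_iff] at hc'
  obtain ⟨⟨hlen, hsig⟩, hR, hrun, hsynth⟩ := hc'
  have hne : c' ≠ [] := by
    intro h0
    rw [h0] at hlen
    simp at hlen
    omega
  have hlast : c'.getLast hne = b := getLast_of_replicate_suffix hu hrun.1 hne
  have hlast' : c'.getLast hne ≠ a := by rw [hlast]; exact hb
  rw [Cset, Finset.mem_filter, mem_seqs_iff]
  refine ⟨⟨by simp [hlen]; omega, fun x hx => ?_⟩, ?_, ?_, ?_⟩
  · rcases List.mem_append.mp hx with h | h
    · exact hsig x h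
    · rw [List.eq_of_mem_replicate h]; exact ha
  · exact RLL_append_replicate hne htℓ hR hlast'
  · exact lastRunIs_append_replicate hne hlast'
  · rw [synth_append_replicate hne a t ht, hlast]
    linarith

theorem stmt11 (n ℓ t : ℕ) (a : ℤ) (T : ℤ)
    (hℓ : 1 ≤ ℓ) (ht : 1 ≤ t) (htℓ : t ≤ ℓ) (ha : 1 ≤ a ∧ a ≤ 4) (hn : t < n) :
    Set.BijOn (fun c : List ℤ => c.take (n - t)) (Cset n ℓ a t T : Set (List ℤ))
      ((Finset.biUnion ((({1, 2, 3, 4} : Finset ℤ).erase a) ×ˢ Finset.Icc 1 ℓ)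
        (fun p => Cset (n - t) ℓ p.1 p.2
          (T - 4 * ((t : ℤ) - 1) - smod (a - p.1)))) : Set (List ℤ)) := by
  refine ⟨?_, ?_, ?_⟩
  · intro c hc
    obtain ⟨b, u, hba, hb1, hb4, hu1, huℓ, hdec, hmem⟩ :=
      mem_Cset_structure hn ht (Finset.mem_coe.mp hc)
    have hpair : (b, u) ∈ (({1, 2, 3, 4} : Finset ℤ).erase a) ×ˢ Finset.Icc 1 ℓ := by
      rw [Finset.mem_product, Finset.mem_erase, Finset.mem_Icc]
      refine ⟨⟨hba, ?_⟩, hu1, huℓ⟩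
      simp only [Finset.mem_insert, Finset.mem_singleton]
      omega
    exact Finset.mem_coe.mpr (Finset.mem_biUnion.mpr ⟨(b, u), hpair, hmem⟩)
  · intro c₁ h₁ c₂ h₂ heq
    obtain ⟨_, _, _, _, _, _, _, hdec₁, _⟩ :=
      mem_Cset_structure hn ht (Finset.mem_coe.mp h₁)
    obtain ⟨_, _, _, _, _, _, _, hdec₂, _⟩ :=
      mem_Cset_structure hn ht (Finset.mem_coe.mp h₂)
    have heq' : c₁.take (n - t) = c₂.take (n - t) := heq
    rw [hdec₁, hdec₂, heq']
  · intro c' hc'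
    rw [Finset.mem_coe, Finset.mem_biUnion] at hc'
    obtain ⟨⟨b, u⟩, hbu, hmem⟩ := hc'
    rw [Finset.mem_product, Finset.mem_erase, Finset.mem_Icc] at hbu
    obtain ⟨⟨hba, -⟩, hu1, huℓ⟩ := hbu
    have hmm := append_mem_Cset hn ht htℓ ha hba hu1 hmem
    have hlen : c'.length = n - t := by
      rw [Cset, Finset.mem_filter, mem_seqs_iff] at hmem
      exact hmem.1.1
    refine ⟨c' ++ List.replicate t a, Finset.mem_coe.mpr hmm, ?_⟩
    show (c' ++ List.replicate t a).take (n - t) = c'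
    rw [List.take_append_of_le_length (by omega), List.take_of_length_le (by omega)]
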